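/- arXiv:1304.3184 — 3 statements merged into one kernel-verified Lean document; each statement's English description precedes it below -/
import Mathlib

section
/- The map Ψ(x,y) = (cos x sin y, cos x cos y, sin x cos y, sin x sin y) takes values in the set {p ∈ S³ : p₁p₃ = p₂p₄}, and its image is exactly this set. -/
open Real

def sphere3 : Set (Fin 4 → ℝ) := {p | ∑ i, p i ^ 2 = 1}

/-- The doubly ruled parametrization of the Clifford torus. -/
noncomputable def Psi (x y : ℝ) : Fin 4 → ℝ :=
  ![Real.cos x * Real.sin y, Real.cos x * Real.cos y,
    Real.sin x * Real.cos y, Real.sin x * Real.sin y]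

/-- The Clifford torus in the rotated coordinates: p₁p₃ = p₂p₄. -/
def cliffordT' : Set (Fin 4 → ℝ) := {p ∈ sphere3 | p 0 * p 2 = p 1 * p 3}

lemma exists_cos_sin (a b : ℝ) (h : a ^ 2 + b ^ 2 = 1) :
    ∃ θ : ℝ, Real.cos θ = a ∧ Real.sin θ = b := by
  have ha : -1 ≤ a ∧ a ≤ 1 := by constructor <;> nlinarith [sq_nonneg b]
  have hs : Real.sin (Real.arccos a) = Real.sqrt (1 - a ^ 2) := Real.sin_arccos a
  have h1 : Real.sqrt (1 - a ^ 2) = |b| := by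
    rw [show (1 : ℝ) - a ^ 2 = b ^ 2 by linarith, Real.sqrt_sq_eq_abs]
  rcases le_or_gt 0 b with hb | hb
  · exact ⟨Real.arccos a, Real.cos_arccos ha.1 ha.2, by rw [hs, h1, abs_of_nonneg hb]⟩
  · exact ⟨-Real.arccos a, by rw [Real.cos_neg]; exact Real.cos_arccos ha.1 ha.2,
      by rw [Real.sin_neg, hs, h1, abs_of_nonpos hb.le]; ring⟩

theorem stmt_3 :
    (∀ x y : ℝ, Psi x y ∈ cliffordT') ∧
    Set.range (fun z : ℝ × ℝ => Psi z.1 z.2) = cliffordT' := by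
  have hmem : ∀ x y : ℝ, Psi x y ∈ cliffordT' := by
    intro x y
    constructor
    · show ∑ i, Psi x y i ^ 2 = 1
      simp [Psi, Fin.sum_univ_four]
      nlinarith [Real.sin_sq_add_cos_sq x, Real.sin_sq_add_cos_sq y]
    · show Psi x y 0 * Psi x y 2 = Psi x y 1 * Psi x y 3
      simp [Psi]; ring
  refine ⟨hmem, Set.Subset.antisymm ?_ ?_⟩
  · rintro _ ⟨⟨x, y⟩, rfl⟩; exact hmem x y
  · rintro p ⟨hp1, hp2⟩
    have hsum : p 0 ^ 2 + p 1 ^ 2 + p 2 ^ 2 + p 3 ^ 2 = 1 := by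
      have := hp1; simp only [sphere3, Set.mem_setOf_eq, Fin.sum_univ_four] at this
      linarith
    rcases eq_or_ne (p 0 ^ 2 + p 1 ^ 2) 0 with hc | hc
    · -- p 0 = p 1 = 0
      have h0 : p 0 = 0 := by nlinarith [sq_nonneg (p 0), sq_nonneg (p 1)]
      have h1 : p 1 = 0 := by nlinarith [sq_nonneg (p 0), sq_nonneg (p 1)]
      obtain ⟨y, hy⟩ := exists_cos_sin (p 2) (p 3) (by nlinarith)
      refine ⟨(π / 2, y), ?_⟩
      funext i
      fin_cases i <;> simp [Psi, hy.1, hy.2, h0, h1]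
    · set c := Real.sqrt (p 0 ^ 2 + p 1 ^ 2) with hc_def
      have hcpos : 0 < c := Real.sqrt_pos.2 (lt_of_le_of_ne (by positivity) (Ne.symm hc))
      have hcsq : c ^ 2 = p 0 ^ 2 + p 1 ^ 2 := Real.sq_sqrt (by positivity)
      obtain ⟨y, hy1, hy2⟩ := exists_cos_sin (p 1 / c) (p 0 / c) (by
        field_simp; linarith [hcsq])
      set s := p 2 * Real.cos y + p 3 * Real.sin y with hs_def
      -- key: p 3 * cos y = p 2 * sin y
      have hkey : p 3 * Real.cos y = p 2 * Real.sin y := by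
        rw [hy1, hy2]
        field_simp
        linarith [hp2]
      have hsc : s * Real.cos y = p 2 := by
        have h := Real.sin_sq_add_cos_sq y
        rw [hs_def]
        linear_combination Real.sin y * hkey + p 2 * h
      have hss : s * Real.sin y = p 3 := by
        have h := Real.sin_sq_add_cos_sq y
        rw [hs_def]
        linear_combination (-Real.cos y) * hkey + p 3 * h
      have hssq : c ^ 2 + s ^ 2 = 1 := by
        have h := Real.sin_sq_add_cos_sq y
        have h2 : s ^ 2 = p 2 ^ 2 + p 3 ^ 2 := by
          rw [hs_def]
          linear_combination (p 2 * Real.sin y - p 3 * Real.cos y) * hkey + (p 2 ^ 2 + p 3 ^ 2) * h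
        linarith [hcsq]
      obtain ⟨x, hx1, hx2⟩ := exists_cos_sin c s hssq
      refine ⟨(x, y), ?_⟩
      funext i
      have e0 : Real.cos x * Real.sin y = p 0 := by
        rw [hx1, hy2]; field_simp
      have e1 : Real.cos x * Real.cos y = p 1 := by
        rw [hx1, hy1]; field_simp
      fin_cases i <;> simp [Psi, e0, e1, hx2, hsc, hss]
end

section
/- For each fixed y₀ ∈ ℝ, the curve x ↦ Ψ(x,y₀) = cos y₀·(0, cos x, sin x, 0) + sin y₀·(cos x, 0, 0, sin x) is a great circle of S³; consequently the surface {p ∈ S³ : p₁p₃ = p₂p₄} is doubly ruled by the two families of great circles {x = const} and {y = const}. -/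
open Real

lemma psi_mem (x y : ℝ) : Psi x y ∈ cliffordT' := by
  refine ⟨?_, ?_⟩
  · show ∑ i, Psi x y i ^ 2 = 1
    simp [Psi, Fin.sum_univ_four]
    nlinarith [Real.sin_sq_add_cos_sq x, Real.sin_sq_add_cos_sq y]
  · show Psi x y 0 * Psi x y 2 = Psi x y 1 * Psi x y 3
    simp [Psi]; ring

theorem stmt_6 :
    -- each curve {y = y₀} is a great circle
    (∀ y₀ : ℝ, ∃ V : Submodule ℝ (Fin 4 → ℝ),
      Module.finrank ℝ V = 2 ∧
      Set.range (fun x => Psi x y₀) = sphere3 ∩ (V : Set (Fin 4 → ℝ))) ∧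
    -- consequently the surface is doubly ruled: every point lies on one circle of
    -- each family, both circles being contained in the surface
    (∀ p ∈ cliffordT', ∃ x y : ℝ, Psi x y = p ∧
      Set.range (fun t => Psi x t) ⊆ cliffordT' ∧
      Set.range (fun t => Psi t y) ⊆ cliffordT') := by
  constructor
  · intro y₀
    set v : Fin 4 → ℝ := ![Real.sin y₀, Real.cos y₀, 0, 0] with hv
    set w : Fin 4 → ℝ := ![0, 0, Real.cos y₀, Real.sin y₀] with hw
    have hpy : Real.sin y₀ ^ 2 + Real.cos y₀ ^ 2 = 1 := Real.sin_sq_add_cos_sq y₀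
    have hli : LinearIndependent ℝ ![v, w] := by
      rw [LinearIndependent.pair_iff]
      intro s t hst
      have h0 := congrFun hst 0
      have h1 := congrFun hst 1
      have h2 := congrFun hst 2
      have h3 := congrFun hst 3
      simp [hv, hw] at h0 h1 h2 h3
      constructor
      · rcases h0 with h|h
        · exact h
        · rcases h1 with h'|h'
          · exact h'
          · simp [h, h'] at hpy
      · rcases h3 with h|h
        · exact h
        · rcases h2 with h'|h'
          · exact h'
          · simp [h, h'] at hpy
    refine ⟨Submodule.span ℝ (Set.range ![v, w]), ?_, ?_⟩
    · rw [finrank_span_eq_card hli]; simp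
    · have hrange : Set.range ![v, w] = {v, w} := by
        simp [Matrix.range_cons, Matrix.range_empty, Set.pair_comm]
      ext p
      constructor
      · rintro ⟨x, rfl⟩
        refine ⟨(psi_mem x y₀).1, ?_⟩
        show Psi x y₀ ∈ (Submodule.span ℝ (Set.range ![v, w]) : Set (Fin 4 → ℝ))
        have : Psi x y₀ = Real.cos x • v + Real.sin x • w := by
          funext i; fin_cases i <;> simp [Psi, hv, hw]
        rw [this]
        exact Submodule.add_mem _
          (Submodule.smul_mem _ _ (Submodule.subset_span ⟨0, rfl⟩))
          (Submodule.smul_mem _ _ (Submodule.subset_span ⟨1, rfl⟩))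
      · rintro ⟨hs, hm⟩
        rw [SetLike.mem_coe, hrange, Submodule.mem_span_pair] at hm
        obtain ⟨a, b, hab⟩ := hm
        have hsum : a ^ 2 + b ^ 2 = 1 := by
          have hs' : ∑ i, p i ^ 2 = 1 := hs
          rw [← hab] at hs'
          simp [Fin.sum_univ_four, hv, hw] at hs'
          nlinarith
        obtain ⟨x, hcx, hsx⟩ := exists_cos_sin a b hsum
        refine ⟨x, ?_⟩
        rw [← hab]
        funext i; fin_cases i <;> simp [Psi, hv, hw, hcx, hsx]
  · intro p hp
    obtain ⟨hs, hc⟩ := hp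
    have hs' : p 0 ^ 2 + p 1 ^ 2 + p 2 ^ 2 + p 3 ^ 2 = 1 := by
      have := hs; simpa [sphere3, Fin.sum_univ_four] using this
    have hc' : p 0 * p 2 = p 1 * p 3 := hc
    suffices h : ∃ x y, Psi x y = p by
      obtain ⟨x, y, hxy⟩ := h
      exact ⟨x, y, hxy, by rintro q ⟨t, rfl⟩; exact psi_mem x t,
        by rintro q ⟨t, rfl⟩; exact psi_mem t y⟩
    by_cases hbc : p 1 ^ 2 + p 2 ^ 2 = 0
    · have hb : p 1 = 0 := by nlinarith
      have hcz : p 2 = 0 := by nlinarith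
      obtain ⟨x, hcx, hsx⟩ := exists_cos_sin (p 0) (p 3) (by nlinarith)
      refine ⟨x, Real.pi / 2, ?_⟩
      funext i; fin_cases i <;>
        simp [Psi, hcx, hsx, hb, hcz]
    · have hbc' : 0 < p 1 ^ 2 + p 2 ^ 2 := lt_of_le_of_ne (by positivity) (Ne.symm hbc)
      set r := Real.sqrt (p 1 ^ 2 + p 2 ^ 2) with hrdef
      have hr2 : r ^ 2 = p 1 ^ 2 + p 2 ^ 2 := Real.sq_sqrt (by positivity)
      have hrpos : 0 < r := Real.sqrt_pos.mpr hbc'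
      obtain ⟨x, hcx, hsx⟩ := exists_cos_sin (p 1 / r) (p 2 / r) (by
        field_simp; linarith [hr2])
      set T := (p 0 * p 1 + p 2 * p 3) / r with hTdef
      have ht2 : r ^ 2 + T ^ 2 = 1 := by
        have key : (p 0 * p 1 + p 2 * p 3) ^ 2
            = (p 0 ^ 2 + p 3 ^ 2) * (p 1 ^ 2 + p 2 ^ 2) := by nlinarith [hc']
        rw [hTdef, div_pow, key, hr2]
        field_simp
        nlinarith [hs']
      obtain ⟨y, hcy, hsy⟩ := exists_cos_sin r T ht2
      have hbt : p 1 * T = p 0 * r := by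
        rw [hTdef, ← mul_div_assoc, div_eq_iff hrpos.ne']
        linear_combination (-(p 2)) * hc' - p 0 * hr2
      have hct : p 2 * T = p 3 * r := by
        rw [hTdef, ← mul_div_assoc, div_eq_iff hrpos.ne']
        linear_combination p 1 * hc' - p 3 * hr2
      refine ⟨x, y, ?_⟩
      funext i
      fin_cases i
      · show Real.cos x * Real.sin y = p 0
        rw [hcx, hsy, div_mul_eq_mul_div, hbt, mul_div_assoc, div_self hrpos.ne', mul_one]
      · show Real.cos x * Real.cos y = p 1
        rw [hcx, hcy, div_mul_cancel₀ _ hrpos.ne']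
      · show Real.sin x * Real.cos y = p 2
        rw [hsx, hcy, div_mul_cancel₀ _ hrpos.ne']
      · show Real.sin x * Real.sin y = p 3
        rw [hsx, hsy, div_mul_eq_mul_div, hct, mul_div_assoc, div_self hrpos.ne', mul_one]
end

section
/- Let T₁ = {p ∈ S³ : p₁p₃ = p₂p₄} and T_j = ρ₃₄^{(j−1)π/m}(T₁) for j = 1,…,m. Then T₁ ∩ ⋯ ∩ T_m = C₁₂ ∪ C₃₄, i.e., the common intersection of all m tori is exactly the union of the great circle in the x₁x₂-plane and the great circle in the x₃x₄-plane. -/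
set_option maxHeartbeats 1000000

open Real

noncomputable def rho34 (t : ℝ) (p : Fin 4 → ℝ) : Fin 4 → ℝ :=
  ![p 0, p 1, p 2 * Real.cos t - p 3 * Real.sin t, p 2 * Real.sin t + p 3 * Real.cos t]

def C12 : Set (Fin 4 → ℝ) := {p | p 0 ^ 2 + p 1 ^ 2 = 1 ∧ p 2 = 0 ∧ p 3 = 0}

def C34 : Set (Fin 4 → ℝ) := {p | p 0 = 0 ∧ p 1 = 0 ∧ p 2 ^ 2 + p 3 ^ 2 = 1}

lemma mem_rot (t : ℝ) (p : Fin 4 → ℝ) :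
    p ∈ rho34 t '' cliffordT' ↔
      (∑ i, p i ^ 2 = 1 ∧
        Real.cos t * (p 0 * p 2 - p 1 * p 3) + Real.sin t * (p 0 * p 3 + p 1 * p 2) = 0) := by
  have pyth := Real.sin_sq_add_cos_sq t
  constructor
  · rintro ⟨q, ⟨hq1, hq2⟩, rfl⟩
    simp only [sphere3, Set.mem_setOf_eq, Fin.sum_univ_four] at hq1
    simp only [rho34, Fin.sum_univ_four]
    simp only [Matrix.cons_val_zero, Matrix.cons_val_one, Matrix.head_cons,
      Matrix.cons_val_two, Matrix.tail_cons, Matrix.cons_val_three]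
    constructor
    · nlinarith [hq1, pyth]
    · nlinarith [hq2, pyth]
  · rintro ⟨h1, h2⟩
    simp only [Fin.sum_univ_four] at h1
    refine ⟨![p 0, p 1, p 2 * Real.cos t + p 3 * Real.sin t,
        -(p 2) * Real.sin t + p 3 * Real.cos t], ⟨?_, ?_⟩, ?_⟩
    · simp only [sphere3, Set.mem_setOf_eq, Fin.sum_univ_four]
      simp only [Matrix.cons_val_zero, Matrix.cons_val_one, Matrix.head_cons,
        Matrix.cons_val_two, Matrix.tail_cons, Matrix.cons_val_three]
      nlinarith [h1, pyth]
    · simp only [Matrix.cons_val_zero, Matrix.cons_val_one, Matrix.head_cons,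
        Matrix.cons_val_two, Matrix.tail_cons, Matrix.cons_val_three]
      nlinarith [h2, pyth]
    · funext i
      fin_cases i <;> simp [rho34] <;>
        first
        | linear_combination p 2 * pyth
        | linear_combination p 3 * pyth

theorem stmt_17 (m : ℕ) (hm : 2 ≤ m) :
    (⋂ j ∈ Finset.range m, rho34 (j * π / m) '' cliffordT') = C12 ∪ C34 := by
  have hm0 : (0:ℝ) < m := by positivity
  ext p
  simp only [Set.mem_iInter, Finset.mem_range, mem_rot]
  constructor
  · intro h
    have h0 := h 0 (by omega)
    have h1 := h 1 (by omega)
    have hsum : ∑ i, p i ^ 2 = 1 := h0.1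
    have hA : p 0 * p 2 - p 1 * p 3 = 0 := by
      have := h0.2
      simpa using this
    have hsin : Real.sin (π / m) ≠ 0 := by
      apply ne_of_gt
      apply Real.sin_pos_of_pos_of_lt_pi
      · positivity
      · rw [div_lt_iff₀ hm0]
        have h2m : (2:ℝ) ≤ m := by exact_mod_cast hm
        nlinarith [Real.pi_pos]
    have hB : p 0 * p 3 + p 1 * p 2 = 0 := by
      have h1' := h1.2
      push_cast at h1'
      rw [hA] at h1'
      simp at h1'
      rcases h1' with h | h
      · exact absurd h hsin
      · exact h
    clear h h0 h1
    have hprod : (p 0 ^ 2 + p 1 ^ 2) * (p 2 ^ 2 + p 3 ^ 2) = 0 := by nlinarith [hA, hB]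
    simp only [Fin.sum_univ_four] at hsum
    rcases mul_eq_zero.1 hprod with h | h
    · right
      have h0 : p 0 = 0 := by nlinarith
      have h1 : p 1 = 0 := by nlinarith
      exact ⟨h0, h1, by nlinarith⟩
    · left
      have h2 : p 2 = 0 := by nlinarith
      have h3 : p 3 = 0 := by nlinarith
      exact ⟨by nlinarith, h2, h3⟩
  · intro h j _
    rcases h with ⟨h1, h2, h3⟩ | ⟨h0, h1, h2⟩
    · refine ⟨by simp [Fin.sum_univ_four, h2, h3]; nlinarith, by rw [h2, h3]; ring⟩
    · refine ⟨by simp [Fin.sum_univ_four, h0, h1]; nlinarith, by rw [h0, h1]; ring⟩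
end
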